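/- Suppose Condition (3) holds at every feasible point q ∈ Q. Then the system has at most one equilibrium point in Q, and at any equilibrium point q* ∈ Q every eigenvalue of the Jacobian matrix Df(q*) has strictly negative real part. (This is the paper's Theorem 2: the system either has a unique asymptotically stable equilibrium point or has no equilibrium point.) -/

import Mathlib

/-- A single-commodity network system: a finite directed acyclic graph on
`Fin N` (no self-loops, at most one direction per pair, connected underlying
undirected graph), buffer sizes `b i ∈ (0,∞]`, nonnegative arrival rates
`lam i`, a `C¹` policy `g i j : ℝ × ℝ → ℝ` for each edge `(i,j) ∈ E`, and a
`C¹` departure function `gT i : ℝ → ℝ` for each vertex. -/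
structure SingleCommoditySystem (N : ℕ) where
  E : Finset (Fin N × Fin N)
  no_self_loops : ∀ e ∈ E, e.1 ≠ e.2
  antisymm : ∀ i u : Fin N, (i, u) ∈ E → (u, i) ∉ E
  acyclic : ∃ rank : Fin N → ℕ, ∀ e ∈ E, rank e.1 < rank e.2
  connected : (SimpleGraph.fromRel fun i u => (i, u) ∈ E).Connected
  b : Fin N → EReal
  b_pos : ∀ i, 0 < b i
  lam : Fin N → ℝ
  lam_nonneg : ∀ i, 0 ≤ lam i
  g : Fin N → Fin N → ℝ → ℝ → ℝ
  gT : Fin N → ℝ → ℝ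
  g_contDiff : ∀ e ∈ E, ContDiff ℝ 1 (fun x : ℝ × ℝ => g e.1 e.2 x.1 x.2)
  gT_contDiff : ∀ i, ContDiff ℝ 1 (gT i)

namespace SingleCommoditySystem

variable {N : ℕ} (S : SingleCommoditySystem N)

/-- The feasible set `Q = Π_i [0, b i]`. -/
def Feasible (q : Fin N → ℝ) : Prop := ∀ i, 0 ≤ q i ∧ (q i : EReal) ≤ S.b i

/-- The dynamics
`f i (q) = lam i + Σ_{k:(k,i)∈E} g k i (q k) (q i) − Σ_{j:(i,j)∈E} g i j (q i) (q j) − gT i (q i)`. -/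
noncomputable def f (q : Fin N → ℝ) (i : Fin N) : ℝ :=
  S.lam i + ∑ k ∈ Finset.univ.filter fun k => (k, i) ∈ S.E, S.g k i (q k) (q i)
    - ∑ j ∈ Finset.univ.filter fun j => (i, j) ∈ S.E, S.g i j (q i) (q j)
    - S.gT i (q i)

/-- Condition (3) at a point `q`: `∂g_{ij}/∂q_i > 0` and `∂g_{ij}/∂q_j < 0`
for every edge `(i,j) ∈ E`, `gT i ' (q i) ≥ 0` for every vertex `i`, and
`gT i ' (q i) > 0` for at least one vertex `i`. -/
def Cond3 (q : Fin N → ℝ) : Prop :=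
  (∀ e ∈ S.E, 0 < deriv (fun x => S.g e.1 e.2 x (q e.2)) (q e.1) ∧
      deriv (fun y => S.g e.1 e.2 (q e.1) y) (q e.2) < 0) ∧
  (∀ i, 0 ≤ deriv (S.gT i) (q i)) ∧ (∃ i, 0 < deriv (S.gT i) (q i))

/-- The Jacobian matrix `Df(q)`, with `(i,u)` entry the partial derivative
`∂f_i/∂q_u` at `q`. -/
noncomputable def jacobian (q : Fin N → ℝ) : Matrix (Fin N) (Fin N) ℝ :=
  fun i u => deriv (fun x => S.f (Function.update q u x) i) (q u)

end SingleCommoditySystem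

open Finset in

lemma key_spectral {N : ℕ} (C : Matrix (Fin N) (Fin N) ℝ) (r : Fin N → Fin N → Prop)
    (hconn : (SimpleGraph.fromRel r).Connected)
    (hpos : ∀ i j : Fin N, i ≠ j → (r i j ∨ r j i) → 0 < C i j)
    (hoff : ∀ i j : Fin N, i ≠ j → 0 ≤ C i j)
    (hrow : ∀ i, ∑ j, C i j ≤ 0)
    (hstrict : ∃ i, ∑ j, C i j < 0)
    (z : ℂ) (v : Fin N → ℂ) (hv : v ≠ 0)
    (heig : ∀ i, ∑ j, (C i j : ℂ) * v j = z * v i) :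
    z.re < 0 := by
  by_contra hz
  push_neg at hz
  obtain ⟨i0, hi0ne⟩ := Function.ne_iff.mp hv
  obtain ⟨iM, -, hmax⟩ := Finset.exists_max_image Finset.univ
    (fun i => ‖v i‖) ⟨i0, Finset.mem_univ i0⟩
  set m := ‖v iM‖ with hmdef
  have hmax' : ∀ i, ‖v i‖ ≤ m := fun i => hmax i (Finset.mem_univ i)
  have hm0 : 0 < m := by
    rcases (norm_nonneg (v iM)).lt_or_eq with h | h
    · exact h
    · exfalso
      apply hi0ne
      have h2 : ‖v i0‖ ≤ 0 := h ▸ hmax' i0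
      simpa using norm_eq_zero.mp (le_antisymm h2 (norm_nonneg _))
  have claim : ∀ i, ‖v i‖ = m →
      (∑ j, C i j = 0) ∧ ∀ j, j ≠ i → 0 < C i j → ‖v j‖ = m := by
    intro i hi
    have hsplit : ∑ j, C i j = C i i + ∑ j ∈ Finset.univ.erase i, C i j := by
      rw [Finset.add_sum_erase _ _ (Finset.mem_univ i)]
    have h1 : (z - (C i i : ℂ)) * v i = ∑ j ∈ Finset.univ.erase i, (C i j : ℂ) * v j := by
      have h := heig i
      rw [← Finset.add_sum_erase _ (fun j => (C i j : ℂ) * v j) (Finset.mem_univ i)] at h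
      rw [sub_mul, ← h]
      ring
    have e1 : ‖z - (C i i : ℂ)‖ * m ≤
        ∑ j ∈ Finset.univ.erase i, C i j * ‖v j‖ := by
      have habs : ‖(z - (C i i : ℂ)) * v i‖ = ‖z - (C i i : ℂ)‖ * m := by
        rw [norm_mul, hi]
      rw [← habs, h1]
      refine le_trans (norm_sum_le _ _) (le_of_eq ?_)
      refine Finset.sum_congr rfl fun j hj => ?_
      rw [norm_mul, Complex.norm_real, Real.norm_eq_abs,
        abs_of_nonneg (hoff i j (Finset.ne_of_mem_erase hj).symm)]
    have e2 : ∑ j ∈ Finset.univ.erase i, C i j * ‖v j‖ ≤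
        (∑ j ∈ Finset.univ.erase i, C i j) * m := by
      rw [Finset.sum_mul]
      refine Finset.sum_le_sum fun j hj => ?_
      exact mul_le_mul_of_nonneg_left (hmax' j) (hoff i j (Finset.ne_of_mem_erase hj).symm)
    have e3 : (∑ j ∈ Finset.univ.erase i, C i j) * m ≤ (-C i i) * m := by
      have : C i i + ∑ j ∈ Finset.univ.erase i, C i j ≤ 0 := hsplit ▸ hrow i
      nlinarith [hm0.le]
    have e4 : (-C i i) * m ≤ (z.re - C i i) * m := by nlinarith [hm0.le]
    have e5 : (z.re - C i i) * m ≤ ‖z - (C i i : ℂ)‖ * m := by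
      have : z.re - C i i ≤ ‖z - (C i i : ℂ)‖ := by
        have := Complex.re_le_norm (z - (C i i : ℂ))
        simpa using this
      nlinarith [hm0.le]
    have q1 : ∑ j ∈ Finset.univ.erase i, C i j * ‖v j‖
        = (∑ j ∈ Finset.univ.erase i, C i j) * m := le_antisymm e2 (by linarith)
    have q2 : (∑ j ∈ Finset.univ.erase i, C i j) * m = (-C i i) * m := le_antisymm e3 (by linarith)
    have hrow0 : ∑ j, C i j = 0 := by
      have : (∑ j ∈ Finset.univ.erase i, C i j) = -C i i := mul_right_cancel₀ hm0.ne' q2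
      rw [hsplit, this]; ring
    refine ⟨hrow0, fun j hj hCij => ?_⟩
    by_contra hne
    have hlt : ‖v j‖ < m := lt_of_le_of_ne (hmax' j) hne
    have : ∑ k ∈ Finset.univ.erase i, C i k * ‖v k‖
        < ∑ k ∈ Finset.univ.erase i, C i k * m := by
      refine Finset.sum_lt_sum (fun k hk => mul_le_mul_of_nonneg_left (hmax' k)
        (hoff i k (Finset.ne_of_mem_erase hk).symm)) ⟨j, Finset.mem_erase.mpr ⟨hj, Finset.mem_univ j⟩,
        (mul_lt_mul_iff_right₀ hCij).mpr hlt⟩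
    rw [← Finset.sum_mul] at this
    linarith [q1]
  have step : ∀ a b, (SimpleGraph.fromRel r).Adj a b →
      ‖v a‖ = m → ‖v b‖ = m := by
    intro a b hab ha
    rw [SimpleGraph.fromRel_adj] at hab
    exact (claim a ha).2 b (Ne.symm hab.1) (hpos a b hab.1 hab.2)
  have hall : ∀ i, ‖v i‖ = m := by
    have aux : ∀ a b, (SimpleGraph.fromRel r).Walk a b → ‖v a‖ = m →
        ‖v b‖ = m := by
      intro a b w
      induction w with
      | nil => exact id
      | cons h p ih => intro ha; exact ih (step _ _ h ha)
    intro i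
    obtain ⟨w⟩ := hconn.preconnected iM i
    exact aux _ _ w rfl
  obtain ⟨i1, hi1⟩ := hstrict
  exact absurd ((claim i1 (hall i1)).1) (ne_of_lt hi1)


namespace SingleCommoditySystemAux
end SingleCommoditySystemAux

namespace SingleCommoditySystem

variable {N : ℕ} (S : SingleCommoditySystem N)

-- ==== calculus helpers ====

lemma g_diff_fst {e : Fin N × Fin N} (he : e ∈ S.E) (c : ℝ) (a : ℝ) :
    DifferentiableAt ℝ (fun x => S.g e.1 e.2 x c) a := by
  have hG : DifferentiableAt ℝ (fun p : ℝ × ℝ => S.g e.1 e.2 p.1 p.2) (a, c) :=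
    ((S.g_contDiff e he).differentiable one_ne_zero) (a, c)
  exact hG.comp a (differentiableAt_id.prodMk (differentiableAt_const c) :
    DifferentiableAt ℝ (fun x : ℝ => (x, c)) a)

lemma g_diff_snd {e : Fin N × Fin N} (he : e ∈ S.E) (a : ℝ) (c : ℝ) :
    DifferentiableAt ℝ (fun y => S.g e.1 e.2 a y) c := by
  have hG : DifferentiableAt ℝ (fun p : ℝ × ℝ => S.g e.1 e.2 p.1 p.2) (a, c) :=
    ((S.g_contDiff e he).differentiable one_ne_zero) (a, c)
  exact hG.comp c ((differentiableAt_const a).prodMk differentiableAt_id)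

lemma g_hasDerivAt_fst {e : Fin N × Fin N} (he : e ∈ S.E) (c : ℝ) (a : ℝ) :
    HasDerivAt (fun x => S.g e.1 e.2 x c) (deriv (fun x => S.g e.1 e.2 x c) a) a :=
  (S.g_diff_fst he c a).hasDerivAt

lemma g_hasDerivAt_snd {e : Fin N × Fin N} (he : e ∈ S.E) (a : ℝ) (c : ℝ) :
    HasDerivAt (fun y => S.g e.1 e.2 a y) (deriv (fun y => S.g e.1 e.2 a y) c) c :=
  (S.g_diff_snd he a c).hasDerivAt

lemma gT_hasDerivAt (i : Fin N) (a : ℝ) :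
    HasDerivAt (S.gT i) (deriv (S.gT i) a) a :=
  (((S.gT_contDiff i).differentiable one_ne_zero) a).hasDerivAt

-- deriv in terms of fderiv of the uncurried map
lemma deriv_fst_eq_fderiv {e : Fin N × Fin N} (he : e ∈ S.E) (a c : ℝ) :
    deriv (fun x => S.g e.1 e.2 x c) a
      = fderiv ℝ (fun p : ℝ × ℝ => S.g e.1 e.2 p.1 p.2) (a, c) (1, 0) := by
  have hG : HasFDerivAt (fun p : ℝ × ℝ => S.g e.1 e.2 p.1 p.2)
      (fderiv ℝ (fun p : ℝ × ℝ => S.g e.1 e.2 p.1 p.2) (a, c)) (a, c) :=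
    (((S.g_contDiff e he).differentiable one_ne_zero) (a, c)).hasFDerivAt
  have hline : HasDerivAt (fun x : ℝ => (x, c)) ((1 : ℝ), (0 : ℝ)) a := by
    exact (hasDerivAt_id a).prodMk (hasDerivAt_const a c)
  exact (hG.comp_hasDerivAt a hline).deriv

lemma deriv_snd_eq_fderiv {e : Fin N × Fin N} (he : e ∈ S.E) (a c : ℝ) :
    deriv (fun y => S.g e.1 e.2 a y) c
      = fderiv ℝ (fun p : ℝ × ℝ => S.g e.1 e.2 p.1 p.2) (a, c) (0, 1) := by
  have hG : HasFDerivAt (fun p : ℝ × ℝ => S.g e.1 e.2 p.1 p.2)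
      (fderiv ℝ (fun p : ℝ × ℝ => S.g e.1 e.2 p.1 p.2) (a, c)) (a, c) :=
    (((S.g_contDiff e he).differentiable one_ne_zero) (a, c)).hasFDerivAt
  have hline : HasDerivAt (fun y : ℝ => (a, y)) ((0 : ℝ), (1 : ℝ)) c := by
    exact (hasDerivAt_const c a).prodMk (hasDerivAt_id c)
  exact (hG.comp_hasDerivAt c hline).deriv


lemma mem_filter_in {i k : Fin N}
    (hk : k ∈ Finset.univ.filter fun k => (k, i) ∈ S.E) : (k, i) ∈ S.E :=
  (Finset.mem_filter.mp hk).2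

lemma f_update_self (q : Fin N → ℝ) (u : Fin N) (x : ℝ) :
    S.f (Function.update q u x) u =
      S.lam u + (∑ k ∈ Finset.univ.filter fun k => (k, u) ∈ S.E, S.g k u (q k) x)
        - (∑ j ∈ Finset.univ.filter fun j => (u, j) ∈ S.E, S.g u j x (q j))
        - S.gT u x := by
  unfold f
  rw [Function.update_self]
  congr 2
  · congr 1
    refine Finset.sum_congr rfl fun k hk => ?_
    have hne : k ≠ u := S.no_self_loops _ (S.mem_filter_in hk)
    rw [Function.update_of_ne hne]
  · refine Finset.sum_congr rfl fun j hj => ?_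
    have hne : j ≠ u := fun h => (S.no_self_loops _ (Finset.mem_filter.mp hj).2) (by rw [h])
    rw [Function.update_of_ne hne]

lemma f_update_other (q : Fin N → ℝ) {i u : Fin N} (hiu : i ≠ u) (x : ℝ) :
    S.f (Function.update q u x) i =
      S.lam i + (∑ k ∈ Finset.univ.filter fun k => (k, i) ∈ S.E,
          S.g k i (Function.update q u x k) (q i))
        - (∑ j ∈ Finset.univ.filter fun j => (i, j) ∈ S.E,
          S.g i j (q i) (Function.update q u x j))
        - S.gT i (q i) := by
  unfold f
  rw [Function.update_of_ne hiu]

lemma jacobian_diag (q : Fin N → ℝ) (u : Fin N) :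
    S.jacobian q u u =
      (∑ k ∈ Finset.univ.filter fun k => (k, u) ∈ S.E, deriv (fun y => S.g k u (q k) y) (q u))
      - (∑ j ∈ Finset.univ.filter fun j => (u, j) ∈ S.E, deriv (fun x => S.g u j x (q j)) (q u))
      - deriv (S.gT u) (q u) := by
  have h1 : HasDerivAt (fun x => ∑ k ∈ Finset.univ.filter fun k => (k, u) ∈ S.E, S.g k u (q k) x)
      (∑ k ∈ Finset.univ.filter fun k => (k, u) ∈ S.E, deriv (fun y => S.g k u (q k) y) (q u))
      (q u) :=
    HasDerivAt.fun_sum fun k hk => S.g_hasDerivAt_snd (e := (k, u)) (S.mem_filter_in hk) (q k) (q u)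
  have h2 : HasDerivAt (fun x => ∑ j ∈ Finset.univ.filter fun j => (u, j) ∈ S.E, S.g u j x (q j))
      (∑ j ∈ Finset.univ.filter fun j => (u, j) ∈ S.E, deriv (fun x => S.g u j x (q j)) (q u))
      (q u) :=
    HasDerivAt.fun_sum fun j hj => S.g_hasDerivAt_fst (e := (u, j)) (Finset.mem_filter.mp hj).2 (q j) (q u)
  have h3 := S.gT_hasDerivAt u (q u)
  have htot := ((h1.const_add (S.lam u)).sub h2).sub h3
  have hfun : (fun x => S.f (Function.update q u x) u)
      = fun x => S.lam u + (∑ k ∈ Finset.univ.filter fun k => (k, u) ∈ S.E, S.g k u (q k) x)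
        - (∑ j ∈ Finset.univ.filter fun j => (u, j) ∈ S.E, S.g u j x (q j)) - S.gT u x := by
    funext x; exact S.f_update_self q u x
  unfold jacobian
  rw [hfun]
  exact htot.deriv


lemma jacobian_offdiag (q : Fin N → ℝ) {i u : Fin N} (hiu : i ≠ u) :
    S.jacobian q i u =
      (if (u, i) ∈ S.E then deriv (fun x => S.g u i x (q i)) (q u) else 0)
      - (if (i, u) ∈ S.E then deriv (fun y => S.g i u (q i) y) (q u) else 0) := by
  have h1 : HasDerivAt (fun x => ∑ k ∈ Finset.univ.filter fun k => (k, i) ∈ S.E,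
        S.g k i (Function.update q u x k) (q i))
      (∑ k ∈ Finset.univ.filter fun k => (k, i) ∈ S.E,
        if k = u then deriv (fun x => S.g u i x (q i)) (q u) else 0) (q u) := by
    refine HasDerivAt.fun_sum fun k hk => ?_
    by_cases hku : k = u
    · subst hku
      rw [if_pos rfl]
      have := S.g_hasDerivAt_fst (e := (k, i)) (S.mem_filter_in hk) (q i) (q k)
      simpa only [Function.update_self] using this
    · rw [if_neg hku]
      have : (fun x => S.g k i (Function.update q u x k) (q i))
          = fun _ => S.g k i (q k) (q i) := by
        funext x; rw [Function.update_of_ne hku]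
      rw [this]
      exact hasDerivAt_const _ _
  have h2 : HasDerivAt (fun x => ∑ j ∈ Finset.univ.filter fun j => (i, j) ∈ S.E,
        S.g i j (q i) (Function.update q u x j))
      (∑ j ∈ Finset.univ.filter fun j => (i, j) ∈ S.E,
        if j = u then deriv (fun y => S.g i u (q i) y) (q u) else 0) (q u) := by
    refine HasDerivAt.fun_sum fun j hj => ?_
    by_cases hju : j = u
    · subst hju
      rw [if_pos rfl]
      have := S.g_hasDerivAt_snd (e := (i, j)) (Finset.mem_filter.mp hj).2 (q i) (q j)
      simpa only [Function.update_self] using this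
    · rw [if_neg hju]
      have : (fun x => S.g i j (q i) (Function.update q u x j))
          = fun _ => S.g i j (q i) (q j) := by
        funext x; rw [Function.update_of_ne hju]
      rw [this]
      exact hasDerivAt_const _ _
  have h3 : HasDerivAt (fun _ : ℝ => S.gT i (q i)) 0 (q u) := hasDerivAt_const _ _
  have htot := ((h1.const_add (S.lam i)).fun_sub h2).fun_sub h3
  have hfun : (fun x => S.f (Function.update q u x) i)
      = fun x => S.lam i + (∑ k ∈ Finset.univ.filter fun k => (k, i) ∈ S.E,
          S.g k i (Function.update q u x k) (q i))
        - (∑ j ∈ Finset.univ.filter fun j => (i, j) ∈ S.E,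
          S.g i j (q i) (Function.update q u x j)) - S.gT i (q i) := by
    funext x; exact S.f_update_other q hiu x
  have hsum1 : (∑ k ∈ Finset.univ.filter fun k => (k, i) ∈ S.E,
        if k = u then deriv (fun x => S.g u i x (q i)) (q u) else 0)
      = if (u, i) ∈ S.E then deriv (fun x => S.g u i x (q i)) (q u) else 0 := by
    rw [Finset.sum_ite_eq' (Finset.univ.filter fun k => (k, i) ∈ S.E) u
      (fun _ => deriv (fun x => S.g u i x (q i)) (q u))]
    simp
  have hsum2 : (∑ j ∈ Finset.univ.filter fun j => (i, j) ∈ S.E,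
        if j = u then deriv (fun y => S.g i u (q i) y) (q u) else 0)
      = if (i, u) ∈ S.E then deriv (fun y => S.g i u (q i) y) (q u) else 0 := by
    rw [Finset.sum_ite_eq' (Finset.univ.filter fun j => (i, j) ∈ S.E) u
      (fun _ => deriv (fun y => S.g i u (q i) y) (q u))]
    simp
  unfold jacobian
  rw [hfun]
  rw [← hsum1, ← hsum2]
  simpa using htot.deriv

lemma jacobian_col_sum (q : Fin N → ℝ) (u : Fin N) :
    ∑ i, S.jacobian q i u = -deriv (S.gT u) (q u) := by
  classical
  rw [← Finset.sum_erase_add _ _ (Finset.mem_univ u), S.jacobian_diag q u]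
  have hoff : ∑ i ∈ Finset.univ.erase u, S.jacobian q i u
      = (∑ i ∈ Finset.univ.erase u,
          if (u, i) ∈ S.E then deriv (fun x => S.g u i x (q i)) (q u) else 0)
        - (∑ i ∈ Finset.univ.erase u,
          if (i, u) ∈ S.E then deriv (fun y => S.g i u (q i) y) (q u) else 0) := by
    rw [← Finset.sum_sub_distrib]
    exact Finset.sum_congr rfl fun i hi =>
      S.jacobian_offdiag q (Finset.ne_of_mem_erase hi)
  have h1 : (∑ i ∈ Finset.univ.erase u,
        if (u, i) ∈ S.E then deriv (fun x => S.g u i x (q i)) (q u) else 0)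
      = ∑ j ∈ Finset.univ.filter fun j => (u, j) ∈ S.E, deriv (fun x => S.g u j x (q j)) (q u) := by
    have huu : ((u, u) ∈ S.E) = False := eq_false fun h => (S.no_self_loops _ h) rfl
    rw [Finset.sum_erase _ (by simp [huu]), ← Finset.sum_filter]
  have h2 : (∑ i ∈ Finset.univ.erase u,
        if (i, u) ∈ S.E then deriv (fun y => S.g i u (q i) y) (q u) else 0)
      = ∑ k ∈ Finset.univ.filter fun k => (k, u) ∈ S.E, deriv (fun y => S.g k u (q k) y) (q u) := by
    have huu : ((u, u) ∈ S.E) = False := eq_false fun h => (S.no_self_loops _ h) rfl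
    rw [Finset.sum_erase _ (by simp [huu]), ← Finset.sum_filter]
  rw [hoff, h1, h2]
  ring

-- ==== sign lemmas under Cond3 ====

lemma jacobian_offdiag_nonneg {p : Fin N → ℝ} (hc : S.Cond3 p) {i u : Fin N} (hiu : i ≠ u) :
    0 ≤ S.jacobian p i u := by
  rw [S.jacobian_offdiag p hiu]
  have h1 : 0 ≤ if (u, i) ∈ S.E then deriv (fun x => S.g u i x (p i)) (p u) else 0 := by
    split_ifs with h
    · exact (hc.1 (u, i) h).1.le
    · exact le_rfl
  have h2 : (if (i, u) ∈ S.E then deriv (fun y => S.g i u (p i) y) (p u) else 0) ≤ 0 := by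
    split_ifs with h
    · exact (hc.1 (i, u) h).2.le
    · exact le_rfl
  linarith

lemma jacobian_offdiag_pos {p : Fin N → ℝ} (hc : S.Cond3 p) {i u : Fin N} (hiu : i ≠ u)
    (hadj : (u, i) ∈ S.E ∨ (i, u) ∈ S.E) : 0 < S.jacobian p i u := by
  rw [S.jacobian_offdiag p hiu]
  rcases hadj with h | h
  · rw [if_pos h, if_neg (S.antisymm u i h)]
    have := (hc.1 (u, i) h).1
    linarith
  · rw [if_neg (S.antisymm i u h), if_pos h]
    have := (hc.1 (i, u) h).2
    linarith

-- ==== smoothness of f, fderiv identities ====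

lemma f_contDiff (i : Fin N) : ContDiff ℝ 1 fun q : Fin N → ℝ => S.f q i := by
  unfold f
  refine ContDiff.sub (ContDiff.sub (ContDiff.add contDiff_const ?_) ?_) ?_
  · refine ContDiff.sum fun k hk => ?_
    exact (S.g_contDiff _ (S.mem_filter_in hk)).comp
      ((ContinuousLinearMap.proj k : ((Fin N) → ℝ) →L[ℝ] ℝ).contDiff.prodMk
        (ContinuousLinearMap.proj i : ((Fin N) → ℝ) →L[ℝ] ℝ).contDiff)
  · refine ContDiff.sum fun j hj => ?_
    exact (S.g_contDiff _ (Finset.mem_filter.mp hj).2).comp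
      ((ContinuousLinearMap.proj i : ((Fin N) → ℝ) →L[ℝ] ℝ).contDiff.prodMk
        (ContinuousLinearMap.proj j : ((Fin N) → ℝ) →L[ℝ] ℝ).contDiff)
  · exact (S.gT_contDiff i).comp
      (ContinuousLinearMap.proj i : ((Fin N) → ℝ) →L[ℝ] ℝ).contDiff

lemma jacobian_eq_fderiv (q : Fin N → ℝ) (i u : Fin N) :
    S.jacobian q i u = fderiv ℝ (fun p => S.f p i) q (Pi.single u 1) := by
  have hline : HasDerivAt (fun x : ℝ => Function.update q u x) (Pi.single u (1:ℝ)) (q u) := by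
    have heq : (fun x : ℝ => Function.update q u x)
        = fun x => q + (x - q u) • (Pi.single u 1 : Fin N → ℝ) := by
      funext x
      funext k
      by_cases hk : k = u
      · subst hk
        simp
      · simp [Function.update_of_ne hk, Pi.single_eq_of_ne hk]
    rw [heq]
    have h := ((hasDerivAt_id (q u)).sub_const (q u)).smul_const (Pi.single u 1 : Fin N → ℝ)
    simpa using h.const_add q
  have hF := (((S.f_contDiff i).differentiable one_ne_zero) q).hasFDerivAt
  rw [← Function.update_eq_self u q] at hF
  have hcomp := hF.comp_hasDerivAt (q u) hline
  rw [Function.update_eq_self u q] at hcomp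
  exact hcomp.deriv

lemma fderiv_apply_eq_sum (q : Fin N → ℝ) (i : Fin N) (Δ : Fin N → ℝ) :
    fderiv ℝ (fun p => S.f p i) q Δ = ∑ u, S.jacobian q i u * Δ u := by
  conv_lhs => rw [← Finset.univ_sum_single Δ]
  rw [map_sum]
  refine Finset.sum_congr rfl fun u _ => ?_
  have hs : Pi.single u (Δ u) = Δ u • (Pi.single u 1 : Fin N → ℝ) := by
    funext k
    by_cases hk : k = u
    · subst hk; simp
    · simp [Pi.single_eq_of_ne hk]
  rw [hs, map_smul, S.jacobian_eq_fderiv q i u]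
  simp [mul_comm]

lemma jacobian_continuous (i u : Fin N) : Continuous fun q : Fin N → ℝ => S.jacobian q i u := by
  have heq : (fun q : Fin N → ℝ => S.jacobian q i u)
      = fun q => fderiv ℝ (fun p => S.f p i) q (Pi.single u 1) :=
    funext fun q => S.jacobian_eq_fderiv q i u
  rw [heq]
  exact ((S.f_contDiff i).continuous_fderiv one_ne_zero).clm_apply continuous_const


lemma seg_feasible {q q' : Fin N → ℝ} (hq : S.Feasible q) (hq' : S.Feasible q')
    {t : ℝ} (ht : t ∈ Set.Icc (0:ℝ) 1) : S.Feasible (q' + t • (q - q')) := by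
  intro i
  obtain ⟨hq1, hq2⟩ := hq i
  obtain ⟨hq1', hq2'⟩ := hq' i
  obtain ⟨ht0, ht1⟩ := ht
  have happ : (q' + t • (q - q')) i = q' i + t * (q i - q' i) := by
    simp [Pi.add_apply, Pi.smul_apply, Pi.sub_apply, smul_eq_mul]
  rw [happ]
  constructor
  · nlinarith
  · rcases le_total (q i) (q' i) with h | h
    · have hle : q' i + t * (q i - q' i) ≤ q' i := by nlinarith
      exact le_trans (EReal.coe_le_coe_iff.mpr hle) hq2'
    · have hle : q' i + t * (q i - q' i) ≤ q i := by nlinarith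
      exact le_trans (EReal.coe_le_coe_iff.mpr hle) hq2

end SingleCommoditySystem

open intervalIntegral in
lemma integral_pos_aux {h : ℝ → ℝ} (hc : Continuous h)
    (hnn : ∀ t ∈ Set.Icc (0:ℝ) 1, 0 ≤ h t) (h0 : 0 < h 0) :
    0 < ∫ t in (0:ℝ)..1, h t := by
  have hev : ∀ᶠ t in nhds (0:ℝ), 0 < h t := (hc.tendsto 0).eventually (eventually_gt_nhds h0)
  obtain ⟨ε, hε, hball⟩ := Metric.eventually_nhds_iff.mp hev
  set δ : ℝ := min (ε / 2) (1 / 2) with hδdef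
  have hδ0 : 0 < δ := lt_min (by linarith) (by norm_num)
  have hδ1 : δ ≤ 1 / 2 := min_le_right _ _
  have hI1 : 0 < ∫ t in (0:ℝ)..δ, h t := by
    refine intervalIntegral_pos_of_pos_on (hc.intervalIntegrable 0 δ) (fun t htt => ?_) hδ0
    refine hball ?_
    have hδε : δ ≤ ε := le_trans (min_le_left _ _) (by linarith)
    have h1 : t < ε := lt_of_lt_of_le htt.2 hδε
    rw [Real.dist_eq, sub_zero, abs_of_pos htt.1]
    exact h1
  have hI2 : 0 ≤ ∫ t in δ..1, h t := by
    refine integral_nonneg (by linarith) fun u hu => hnn u ⟨le_trans hδ0.le hu.1, hu.2⟩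
  have hadd := integral_add_adjacent_intervals (μ := MeasureTheory.volume)
    (hc.intervalIntegrable 0 δ) (hc.intervalIntegrable δ 1)
  rw [← hadd]
  exact add_pos_of_pos_of_nonneg hI1 hI2

/-- **Theorem 2.** If Condition (3) holds at every feasible point, then the
system has at most one equilibrium point in `Q`, and at any equilibrium point
`q* ∈ Q` every eigenvalue of the Jacobian `Df(q*)` has strictly negative real
part. -/
theorem stmt1 {N : ℕ} (S : SingleCommoditySystem N)
    (h3 : ∀ q, S.Feasible q → S.Cond3 q) :
    (∀ q q', S.Feasible q → S.Feasible q' →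
      (∀ i, S.f q i = 0) → (∀ i, S.f q' i = 0) → q = q') ∧
    (∀ q, S.Feasible q → (∀ i, S.f q i = 0) →
      ∀ z : ℂ, ((S.jacobian q).map (fun x : ℝ => (x : ℂ))).charpoly.IsRoot z →
        z.re < 0) := by
  constructor
  · -- uniqueness
    intro q q' hq hq' heq heq'
    by_contra hne
    set seg : ℝ → (Fin N → ℝ) := fun t => q' + t • (q - q') with hsegdef
    have hfeas : ∀ t ∈ Set.Icc (0:ℝ) 1, S.Feasible (seg t) := fun t ht =>
      S.seg_feasible hq hq' ht
    have hsegcont : Continuous seg := by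
      apply Continuous.add continuous_const
      exact continuous_id.smul continuous_const
    have hjc : ∀ i u, Continuous fun t => S.jacobian (seg t) i u := fun i u =>
      (S.jacobian_continuous i u).comp hsegcont
    have hseg0 : seg 0 = q' := by funext k; simp [hsegdef]
    have hseg1 : seg 1 = q := by funext k; simp [hsegdef]
    set B : Matrix (Fin N) (Fin N) ℝ :=
      (fun i u => ∫ t in (0:ℝ)..1, S.jacobian (seg t) i u) with hBdef
    -- B maps q - q' to 0
    have hBrow : ∀ i, ∑ u, B i u * (q - q') u = 0 := by
      intro i
      have hderiv : ∀ t ∈ Set.uIcc (0:ℝ) 1, HasDerivAt (fun s => S.f (seg s) i)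
          (∑ u, S.jacobian (seg t) i u * (q - q') u) t := by
        intro t _
        have hline : HasDerivAt seg (q - q') t := by
          have h := (hasDerivAt_id t).smul_const (q - q')
          have h2 := h.const_add q'
          rw [one_smul] at h2
          exact h2
        have hF := (((S.f_contDiff i).differentiable one_ne_zero) (seg t)).hasFDerivAt
        have hcomp := hF.comp_hasDerivAt t hline
        rw [S.fderiv_apply_eq_sum] at hcomp
        exact hcomp
      have hint : IntervalIntegrable
          (fun t => ∑ u, S.jacobian (seg t) i u * (q - q') u)
          MeasureTheory.volume 0 1 :=
        Continuous.intervalIntegrable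
          (continuous_finset_sum _ fun u _ => (hjc i u).mul continuous_const) 0 1
      have hFTC := intervalIntegral.integral_eq_sub_of_hasDerivAt hderiv hint
      rw [hseg0, hseg1, heq i, heq' i, sub_zero] at hFTC
      have hswap : ∑ u, B i u * (q - q') u
          = ∫ t in (0:ℝ)..1, ∑ u, S.jacobian (seg t) i u * (q - q') u := by
        rw [intervalIntegral.integral_finset_sum (μ := MeasureTheory.volume)
          (f := fun u t => S.jacobian (seg t) i u * (q - q') u)
          (fun u _ => Continuous.intervalIntegrable ((hjc i u).mul continuous_const) 0 1)]
        refine Finset.sum_congr rfl fun u _ => ?_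
        rw [hBdef]
        exact (intervalIntegral.integral_mul_const _ _).symm
      rw [hswap, hFTC]
    have hΔne : (q - q' : Fin N → ℝ) ≠ 0 := by
      intro h
      apply hne
      funext k
      have := congrFun h k
      simp only [Pi.sub_apply, Pi.zero_apply] at this
      linarith
    have hBmulvec : B.mulVec (q - q') = 0 := by
      funext i
      simp only [Matrix.mulVec, dotProduct, Pi.zero_apply]
      exact hBrow i
    have hdetB : B.det = 0 := Matrix.exists_mulVec_eq_zero_iff.mp ⟨q - q', hΔne, hBmulvec⟩
    have hdetBT : B.transpose.det = 0 := by rw [Matrix.det_transpose]; exact hdetB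
    obtain ⟨w, hw, hmulw⟩ := Matrix.exists_mulVec_eq_zero_iff.mpr hdetBT
    have hw' : ∀ i, ∑ j, B j i * w j = 0 := by
      intro i
      have := congrFun hmulw i
      simpa only [Matrix.mulVec, dotProduct, Matrix.transpose_apply,
        Pi.zero_apply] using this
    -- apply the key lemma with z = 0
    have hkey := key_spectral (fun i j => B j i) (fun i u => (i, u) ∈ S.E) S.connected
      ?_ ?_ ?_ ?_ 0 (fun i => (w i : ℂ)) ?_ ?_
    · norm_num at hkey
    · -- hpos
      intro i j hij hadj
      rw [hBdef]
      refine intervalIntegral.intervalIntegral_pos_of_pos_on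
        ((hjc j i).intervalIntegrable 0 1) (fun t htt => ?_) zero_lt_one
      exact S.jacobian_offdiag_pos (h3 _ (hfeas t ⟨htt.1.le, htt.2.le⟩)) hij.symm hadj
    · -- hoff
      intro i j hij
      rw [hBdef]
      refine intervalIntegral.integral_nonneg zero_le_one fun t htt => ?_
      exact S.jacobian_offdiag_nonneg (h3 _ (hfeas t htt)) hij.symm
    · -- hrow
      intro i
      have hsum : ∑ j, B j i = ∫ t in (0:ℝ)..1, -deriv (S.gT i) (seg t i) := by
        rw [← intervalIntegral.integral_finset_sum
          (fun j _ => (hjc j i).intervalIntegrable 0 1)]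
        refine intervalIntegral.integral_congr fun t _ => ?_
        exact S.jacobian_col_sum (seg t) i
      rw [hsum, intervalIntegral.integral_neg, neg_nonpos]
      refine intervalIntegral.integral_nonneg zero_le_one fun t htt => ?_
      exact (h3 _ (hfeas t htt)).2.1 i
    · -- hstrict
      obtain ⟨i1, hi1⟩ := (h3 q' hq').2.2
      refine ⟨i1, ?_⟩
      have hsum : ∑ j, B j i1 = ∫ t in (0:ℝ)..1, -deriv (S.gT i1) (seg t i1) := by
        rw [← intervalIntegral.integral_finset_sum
          (fun j _ => (hjc j i1).intervalIntegrable 0 1)]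
        refine intervalIntegral.integral_congr fun t _ => ?_
        exact S.jacobian_col_sum (seg t) i1
      rw [hsum, intervalIntegral.integral_neg, neg_lt, neg_zero]
      refine integral_pos_aux ?_ ?_ ?_
      · exact ((S.gT_contDiff i1).continuous_deriv le_rfl).comp
          ((continuous_apply i1).comp hsegcont)
      · intro t htt
        exact (h3 _ (hfeas t htt)).2.1 i1
      · rw [show seg 0 = q' from hseg0]
        exact hi1
    · -- hv
      intro h
      apply hw
      funext k
      have := congrFun h k
      simpa using this
    · -- heig
      intro i
      rw [zero_mul, ← Complex.ofReal_zero, ← hw' i]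
      push_cast
      ring
  · -- eigenvalue part
    intro q hq _ z hz
    have hc := h3 q hq
    set A := S.jacobian q with hAdef
    set M := A.map (fun x : ℝ => (x : ℂ)) with hMdef
    have hev : Polynomial.eval z M.charpoly = 0 := hz
    have hmapdet : (Matrix.diagonal (fun _ : Fin N => z) - M).det = 0 := by
      have h1 : Polynomial.eval z M.charpoly
          = ((M.charmatrix).map (Polynomial.evalRingHom z)).det := by
        rw [Matrix.charpoly]
        exact (RingHom.map_det (Polynomial.evalRingHom z) _)
      have h2 : (M.charmatrix).map (Polynomial.evalRingHom z)
          = Matrix.diagonal (fun _ : Fin N => z) - M := by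
        ext i j
        by_cases hij : i = j
        · subst hij
          simp [Matrix.charmatrix_apply_eq, Matrix.map_apply]
        · simp [Matrix.charmatrix_apply_ne _ _ _ hij, Matrix.map_apply,
            Matrix.diagonal_apply_ne _ hij]
      rw [← h2, ← h1]
      exact hev
    have hdetT : (Matrix.diagonal (fun _ : Fin N => z) - M).transpose.det = 0 := by
      rw [Matrix.det_transpose]
      exact hmapdet
    obtain ⟨v, hv, hmul⟩ := Matrix.exists_mulVec_eq_zero_iff.mpr hdetT
    have heig : ∀ i, ∑ j, ((A j i : ℝ) : ℂ) * v j = z * v i := by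
      intro i
      have h0 := congrFun hmul i
      simp only [Matrix.mulVec, dotProduct, Matrix.transpose_apply,
        Matrix.sub_apply, Pi.zero_apply, sub_mul] at h0
      rw [Finset.sum_sub_distrib] at h0
      have hdiag : ∑ j, (Matrix.diagonal (fun _ : Fin N => z)) j i * v j = z * v i := by
        have : ∀ j, (Matrix.diagonal (fun _ : Fin N => z)) j i * v j
            = if j = i then z * v j else 0 := by
          intro j
          by_cases hji : j = i
          · subst hji; simp [Matrix.diagonal_apply_eq]
          · simp [Matrix.diagonal_apply_ne _ hji, hji]
        rw [Finset.sum_congr rfl fun j _ => this j,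
          Finset.sum_ite_eq' Finset.univ i (fun j => z * v j)]
        simp
      rw [hdiag] at h0
      have : ∀ j, M j i * v j = ((A j i : ℝ) : ℂ) * v j := by
        intro j
        rw [hMdef]
        simp [Matrix.map_apply]
      rw [Finset.sum_congr rfl fun j _ => this j] at h0
      linear_combination -h0
    exact key_spectral (fun i j => A j i) (fun i u => (i, u) ∈ S.E) S.connected
      (fun i j hij hadj => S.jacobian_offdiag_pos hc hij.symm hadj)
      (fun i j hij => S.jacobian_offdiag_nonneg hc hij.symm)
      (fun i => by rw [S.jacobian_col_sum q i]; linarith [hc.2.1 i])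
      (by obtain ⟨i1, hi1⟩ := hc.2.2
          exact ⟨i1, by rw [S.jacobian_col_sum q i1]; linarith⟩)
      z v hv heig
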